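/- arXiv:math/0407265 — 2 statements merged into one kernel-verified Lean document; each statement's English description precedes it below -/
import Mathlib

section
/- For nonnegative integers n ≤ N and complex a, z with |z| suitably restricted (or as a formal power series identity), the regularized hypergeometric function satisfies: F̂(-n, a; -N; z) = (-1)^{N-n} (Γ(a) N!/n!) · 2F1(-n, a; -N; z) + (Γ(a+N+1)(N-n)!/(N+1)!) · z^{N+1} · 2F1(N-n+1, a+N+1; N+2; z), where 2F1(-n, a; -N; z) denotes the terminating sum ∑_{k=0}^n ((-n)_k(a)_k/((-N)_k k!)) z^k. -/
open Finset

noncomputable def poch (x : ℂ) (k : ℕ) : ℂ := (ascPochhammer ℂ k).eval x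

/-- Terminating Gauss hypergeometric series `2F1(-n, b; c; z)` as a finite sum. -/
noncomputable def hyp (n : ℕ) (b c : ℂ) (z : ℂ) : ℂ :=
  ∑ k ∈ Finset.range (n + 1),
    poch (-(n : ℂ)) k * poch b k / (poch c k * (Nat.factorial k : ℂ)) * z ^ k
open Filter Topology

lemma poch_zero (x : ℂ) : poch x 0 = 1 := by simp [poch]

lemma poch_succ (x : ℂ) (k : ℕ) : poch x (k+1) = poch x k * (x + k) := by
  simp [poch, ascPochhammer_succ_right]

lemma poch_ne_zero {x : ℂ} (k : ℕ) (hx : ∀ i : ℕ, i < k → x + i ≠ 0) : poch x k ≠ 0 := by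
  induction k with
  | zero => simp [poch_zero]
  | succ k ih =>
    rw [poch_succ]
    exact mul_ne_zero (ih fun i hi => hx i (by omega)) (hx k (by omega))

lemma natpos_ne_neg {r : ℕ} (hr : 0 < r) (m : ℕ) : ((r:ℂ)) ≠ -(m:ℂ) := by
  intro h
  rw [← Complex.ofReal_natCast r, ← Complex.ofReal_natCast m, ← Complex.ofReal_neg,
    Complex.ofReal_inj] at h
  have h1 : (0:ℝ) < r := by exact_mod_cast hr
  have h2 : (0:ℝ) ≤ m := Nat.cast_nonneg m
  linarith

lemma gamma_prod (m : ℕ) (ε : ℂ) (h : ∀ j : ℕ, j ≤ m → ε - j ≠ 0) :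
    Complex.Gamma (ε + 1) = (∏ j ∈ range (m+1), (ε - j)) * Complex.Gamma (ε - m) := by
  induction m with
  | zero => simpa using Complex.Gamma_add_one ε (by simpa using h 0 le_rfl)
  | succ m ih =>
    rw [prod_range_succ, mul_assoc, ih (fun j hj => h j (by omega))]
    congr 1
    have key := Complex.Gamma_add_one (ε - ((m+1:ℕ):ℂ)) (h (m+1) le_rfl)
    have e : ε - ((m+1:ℕ):ℂ) + 1 = ε - (m:ℕ) := by push_cast; ring
    rw [e] at key
    rw [key]

lemma prodneg (m : ℕ) : ∏ j ∈ range m, ((0:ℂ) - (j+1)) = (-1)^m * m.factorial := by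
  induction m with
  | zero => simp
  | succ m ih =>
    rw [prod_range_succ, ih, Nat.factorial_succ]
    push_cast
    ring

lemma fact_ne (m : ℕ) : ((m.factorial : ℂ)) ≠ 0 := Nat.cast_ne_zero.mpr m.factorial_ne_zero

lemma prodneg_ne (m : ℕ) : ((-1:ℂ))^m * m.factorial ≠ 0 :=
  mul_ne_zero (pow_ne_zero _ (by norm_num)) (fact_ne m)

lemma resG (m : ℕ) : Tendsto (fun ε : ℂ => ε * Complex.Gamma (ε - m)) (𝓝[≠] 0)
    (𝓝 ((-1)^m / m.factorial)) := by
  have hg : ContinuousAt Complex.Gamma 1 :=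
    (Complex.differentiableAt_Gamma 1 (fun j => by
      simpa using natpos_ne_neg (r := 1) (by norm_num) j)).continuousAt
  have h1 : Tendsto (fun ε : ℂ => Complex.Gamma (ε + 1)) (𝓝 0) (𝓝 1) := by
    have ht : Tendsto (fun ε : ℂ => ε + 1) (𝓝 0) (𝓝 1) := by
      simpa using (continuous_add_right (1:ℂ)).tendsto 0
    have := hg.tendsto.comp ht
    rw [Complex.Gamma_one] at this
    exact this
  have h2 : Tendsto (fun ε : ℂ => ∏ j ∈ range m, (ε - (j+1))) (𝓝 0)
      (𝓝 ((-1)^m * m.factorial)) := by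
    rw [← prodneg m]
    exact (continuous_finset_prod (range m) (fun j _ =>
      continuous_id.sub continuous_const)).tendsto 0
  have hc := h1.div h2 (prodneg_ne m)
  have hval : (1:ℂ) / ((-1)^m * m.factorial) = (-1)^m / m.factorial := by
    rw [div_eq_div_iff (prodneg_ne m) (fact_ne m)]
    rw [← mul_assoc, ← pow_add, ← two_mul, pow_mul]
    norm_num
  rw [hval] at hc
  have hev : ∀ᶠ ε in 𝓝[≠] (0:ℂ),
      Complex.Gamma (ε + 1) / ∏ j ∈ range m, (ε - (j+1))
      = ε * Complex.Gamma (ε - m) := by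
    filter_upwards [self_mem_nhdsWithin,
      eventually_nhdsWithin_of_eventually_nhds (Metric.ball_mem_nhds (0:ℂ) one_pos)]
      with ε hε hball
    have hε0 : ε ≠ 0 := hε
    have hnorm : ‖ε‖ < 1 := by simpa using hball
    have hsub : ∀ j : ℕ, j ≤ m → ε - j ≠ 0 := by
      intro j hj
      rcases Nat.eq_zero_or_pos j with h | h
      · simpa [h] using hε0
      · intro hc
        rw [sub_eq_zero] at hc
        have h1j : (1:ℝ) ≤ ‖(j:ℂ)‖ := by
          rw [Complex.norm_natCast]
          exact_mod_cast h
        rw [hc] at hnorm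
        linarith
    have hgp := gamma_prod m ε hsub
    have hP : (∏ j ∈ range (m+1), (ε - j)) = (∏ j ∈ range m, (ε - (j+1))) * ε := by
      rw [prod_range_succ']
      push_cast
      simp
    have hPne : (∏ j ∈ range m, (ε - ((j:ℂ)+1))) ≠ 0 := by
      apply prod_ne_zero_iff.mpr
      intro j hj
      have := hsub (j+1) (by have := Finset.mem_range.mp hj; omega)
      push_cast at this
      exact this
    rw [hgp, hP]
    field_simp
  exact Tendsto.congr' hev (hc.mono_left nhdsWithin_le_nhds)

lemma pochNeg {n k : ℕ} (h : k ≤ n) :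
    poch (-(n:ℂ)) k = (-1)^k * (n.factorial : ℂ) / ((n-k).factorial : ℂ) := by
  induction k with
  | zero => simp [poch_zero, div_self (fact_ne n)]
  | succ k ih =>
    have hk : k ≤ n := by omega
    rw [poch_succ, ih hk]
    have hfs : ((n - k).factorial : ℂ) = ((n - k : ℕ) : ℂ) * ((n - (k+1)).factorial : ℂ) := by
      have : n - k = (n - (k+1)) + 1 := by omega
      rw [this, Nat.factorial_succ]
      push_cast
      ring
    have hcast : -(n:ℂ) + k = -(((n - k : ℕ)) : ℂ) := by
      have : ((n - k : ℕ) : ℂ) = (n : ℂ) - k := by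
        push_cast [Nat.cast_sub hk]
        ring
      rw [this]; ring
    have hne : ((n - k : ℕ) : ℂ) ≠ 0 := Nat.cast_ne_zero.mpr (by omega)
    rw [hcast, hfs]
    have alg : ∀ A c F : ℂ, c ≠ 0 → F ≠ 0 →
        (-1:ℂ)^k * A / (c * F) * -c = (-1)^(k+1) * A / F := by
      intro A c F hc hF
      field_simp
      ring
    exact alg _ _ _ hne (fact_ne _)

lemma gammaPoch (x : ℂ) (k : ℕ) (hx : ∀ i : ℕ, i < k → x + i ≠ 0) :
    Complex.Gamma (x + k) = poch x k * Complex.Gamma x := by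
  induction k with
  | zero => simp [poch_zero]
  | succ k ih =>
    have e : x + ((k+1:ℕ):ℂ) = (x + k) + 1 := by push_cast; ring
    rw [e, Complex.Gamma_add_one _ (hx k (by omega)), ih (fun i hi => hx i (by omega)),
      poch_succ]
    ring

lemma factPoch (m j : ℕ) : (((m + j).factorial : ℕ) : ℂ)
    = (m.factorial : ℂ) * poch ((m:ℂ)+1) j := by
  induction j with
  | zero => simp [poch_zero]
  | succ j ih =>
    have : m + (j+1) = (m + j) + 1 := by omega
    rw [this, Nat.factorial_succ, poch_succ]
    push_cast [ih]
    ring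

lemma gamma_one_add_nat (k : ℕ) : Complex.Gamma (1 + (k:ℂ)) = (k.factorial : ℂ) := by
  rw [add_comm]; exact Complex.Gamma_nat_eq_factorial k

lemma den_ne (q k : ℕ) : ((-1:ℂ))^q / (q.factorial : ℂ) * (k.factorial : ℂ) ≠ 0 :=
  mul_ne_zero (div_ne_zero (pow_ne_zero _ (by norm_num)) (fact_ne q)) (fact_ne k)

lemma limLe {n N k : ℕ} (hk : k ≤ n) (hnN : n ≤ N) (a : ℂ) :
    Tendsto (fun ε : ℂ => Complex.Gamma (-(n:ℂ) + k + ε) * Complex.Gamma (a + k) /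
        (Complex.Gamma (-(N:ℂ) + k + ε) * Complex.Gamma (1 + k))) (𝓝[≠] 0)
      (𝓝 ((-1)^(N-n) * (((N-k).factorial : ℕ) : ℂ) / (((n-k).factorial : ℕ) : ℂ) *
        Complex.Gamma (a + k) / ((k.factorial : ℂ)))) := by
  set p := n - k with hp
  set q := N - k with hq
  have ep : ∀ ε : ℂ, -(n:ℂ) + k + ε = ε - (p:ℂ) := by
    intro ε; rw [hp, Nat.cast_sub hk]; ring
  have eq' : ∀ ε : ℂ, -(N:ℂ) + k + ε = ε - (q:ℂ) := by
    intro ε; rw [hq, Nat.cast_sub (hk.trans hnN)]; ring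
  have haux : Tendsto (fun ε : ℂ => (ε * Complex.Gamma (ε - (p:ℂ))) * Complex.Gamma (a + k) /
      ((ε * Complex.Gamma (ε - (q:ℂ))) * (k.factorial : ℂ))) (𝓝[≠] 0)
      (𝓝 (((-1)^p / (p.factorial : ℂ)) * Complex.Gamma (a + k) /
        (((-1)^q / (q.factorial : ℂ)) * (k.factorial : ℂ)))) :=
    ((resG p).mul_const _).div ((resG q).mul_const _) (den_ne q k)
  have hev : ∀ᶠ ε in 𝓝[≠] (0:ℂ),
      (ε * Complex.Gamma (ε - (p:ℂ))) * Complex.Gamma (a + k) /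
        ((ε * Complex.Gamma (ε - (q:ℂ))) * (k.factorial : ℂ))
      = Complex.Gamma (-(n:ℂ) + k + ε) * Complex.Gamma (a + k) /
        (Complex.Gamma (-(N:ℂ) + k + ε) * Complex.Gamma (1 + k)) := by
    filter_upwards [self_mem_nhdsWithin] with ε hε
    have hε0 : ε ≠ 0 := hε
    rw [ep, eq', gamma_one_add_nat, mul_assoc, mul_assoc, mul_div_mul_left _ _ hε0]
  have hval : ((-1:ℂ))^p / (p.factorial : ℂ) * Complex.Gamma (a + k) /
      (((-1:ℂ))^q / (q.factorial : ℂ) * (k.factorial : ℂ))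
      = (-1)^(N-n) * ((q.factorial : ℕ) : ℂ) / ((p.factorial : ℕ) : ℂ) *
        Complex.Gamma (a + k) / ((k.factorial : ℂ)) := by
    have hpq : q = p + (N - n) := by omega
    rw [hpq, pow_add]
    have h1 : ((-1:ℂ))^p ≠ 0 := pow_ne_zero _ (by norm_num)
    have h2 : ((-1:ℂ))^(N-n) ≠ 0 := pow_ne_zero _ (by norm_num)
    field_simp
    ring_nf
    rw [mul_comm (N-n) 2, pow_mul]
    norm_num
  rw [← hval]
  exact Tendsto.congr' hev haux

lemma limMid {n N k : ℕ} (hn : n < k) (hk : k ≤ N) (a : ℂ) :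
    Tendsto (fun ε : ℂ => Complex.Gamma (-(n:ℂ) + k + ε) * Complex.Gamma (a + k) /
        (Complex.Gamma (-(N:ℂ) + k + ε) * Complex.Gamma (1 + k))) (𝓝[≠] 0) (𝓝 0) := by
  set r := k - n with hr
  set q := N - k with hq
  have er : ∀ ε : ℂ, -(n:ℂ) + k + ε = (r:ℂ) + ε := by
    intro ε; rw [hr, Nat.cast_sub hn.le]; ring
  have eq' : ∀ ε : ℂ, -(N:ℂ) + k + ε = ε - (q:ℂ) := by
    intro ε; rw [hq, Nat.cast_sub hk]; ring
  have hΓr : Tendsto (fun ε : ℂ => Complex.Gamma ((r:ℂ) + ε)) (𝓝 0)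
      (𝓝 (Complex.Gamma (r:ℂ))) := by
    have hc : ContinuousAt Complex.Gamma (r:ℂ) :=
      (Complex.differentiableAt_Gamma _ (natpos_ne_neg (by omega))).continuousAt
    have ht : Tendsto (fun ε : ℂ => (r:ℂ) + ε) (𝓝 0) (𝓝 (r:ℂ)) := by
      simpa using (continuous_add_left (r:ℂ)).tendsto (0:ℂ)
    exact hc.tendsto.comp ht
  have hnum : Tendsto (fun ε : ℂ => (Complex.Gamma ((r:ℂ) + ε) * Complex.Gamma (a + k)) * ε)
      (𝓝[≠] 0) (𝓝 0) := by
    have := ((hΓr.mul_const (Complex.Gamma (a + k))).mul tendsto_id).mono_left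
      (nhdsWithin_le_nhds (s := {(0:ℂ)}ᶜ))
    simpa using this
  have hden : Tendsto (fun ε : ℂ => (ε * Complex.Gamma (ε - (q:ℂ))) * (k.factorial : ℂ))
      (𝓝[≠] 0) (𝓝 (((-1:ℂ))^q / (q.factorial : ℂ) * (k.factorial : ℂ))) :=
    (resG q).mul_const _
  have haux := hnum.div hden (den_ne q k)
  rw [zero_div] at haux
  have hev : ∀ᶠ ε in 𝓝[≠] (0:ℂ),
      (Complex.Gamma ((r:ℂ) + ε) * Complex.Gamma (a + k)) * ε /
        ((ε * Complex.Gamma (ε - (q:ℂ))) * (k.factorial : ℂ))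
      = Complex.Gamma (-(n:ℂ) + k + ε) * Complex.Gamma (a + k) /
        (Complex.Gamma (-(N:ℂ) + k + ε) * Complex.Gamma (1 + k)) := by
    filter_upwards [self_mem_nhdsWithin] with ε hε
    have hε0 : ε ≠ 0 := hε
    rw [er, eq', gamma_one_add_nat,
      show (ε * Complex.Gamma (ε - (q:ℂ))) * (k.factorial : ℂ)
        = (Complex.Gamma (ε - (q:ℂ)) * (k.factorial : ℂ)) * ε by ring,
      mul_div_mul_right _ _ hε0]
  exact Tendsto.congr' hev haux

lemma limGt {n N k : ℕ} (hnN : n ≤ N) (hk : N < k) (a : ℂ) :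
    Tendsto (fun ε : ℂ => Complex.Gamma (-(n:ℂ) + k + ε) * Complex.Gamma (a + k) /
        (Complex.Gamma (-(N:ℂ) + k + ε) * Complex.Gamma (1 + k))) (𝓝[≠] 0)
      (𝓝 (Complex.Gamma (((k - n : ℕ) : ℂ)) * Complex.Gamma (a + k) /
        (Complex.Gamma (((k - N : ℕ) : ℂ)) * (k.factorial : ℂ)))) := by
  have en : ∀ ε : ℂ, -(n:ℂ) + k + ε = ((k - n : ℕ) : ℂ) + ε := by
    intro ε; rw [Nat.cast_sub (by omega)]; ring
  have eN : ∀ ε : ℂ, -(N:ℂ) + k + ε = ((k - N : ℕ) : ℂ) + ε := by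
    intro ε; rw [Nat.cast_sub (by omega)]; ring
  have hΓ : ∀ (r : ℕ), 0 < r → Tendsto (fun ε : ℂ => Complex.Gamma ((r:ℂ) + ε)) (𝓝 0)
      (𝓝 (Complex.Gamma (r:ℂ))) := by
    intro r hr
    have hc : ContinuousAt Complex.Gamma (r:ℂ) :=
      (Complex.differentiableAt_Gamma _ (natpos_ne_neg hr)).continuousAt
    have ht : Tendsto (fun ε : ℂ => (r:ℂ) + ε) (𝓝 0) (𝓝 (r:ℂ)) := by
      simpa using (continuous_add_left (r:ℂ)).tendsto (0:ℂ)
    exact hc.tendsto.comp ht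
  have hden_ne : Complex.Gamma (((k - N : ℕ) : ℂ)) * (k.factorial : ℂ) ≠ 0 :=
    mul_ne_zero (Complex.Gamma_ne_zero (natpos_ne_neg (by omega))) (fact_ne k)
  have haux := (((hΓ (k - n) (by omega)).mul_const (Complex.Gamma (a + k))).div
    ((hΓ (k - N) (by omega)).mul_const ((k.factorial : ℂ))) hden_ne).mono_left
    (nhdsWithin_le_nhds (s := {(0:ℂ)}ᶜ))
  have hev : ∀ᶠ ε in 𝓝[≠] (0:ℂ),
      Complex.Gamma (((k - n : ℕ):ℂ) + ε) * Complex.Gamma (a + k) /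
        (Complex.Gamma (((k - N : ℕ):ℂ) + ε) * (k.factorial : ℂ))
      = Complex.Gamma (-(n:ℂ) + k + ε) * Complex.Gamma (a + k) /
        (Complex.Gamma (-(N:ℂ) + k + ε) * Complex.Gamma (1 + k)) := by
    filter_upwards [] with ε
    rw [en, eN, gamma_one_add_nat]
  exact Tendsto.congr' hev haux

lemma cast_add_ne {b : ℕ} (hb : 0 < b) (x : ℂ) (hx : x = (b:ℂ)) : x ≠ 0 := by
  rw [hx]; exact Nat.cast_ne_zero.mpr (by omega)

lemma pochC_ne (N j : ℕ) : poch ((N:ℂ) + 2) j ≠ 0 := by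
  apply poch_ne_zero
  intro i _
  have : (N:ℂ) + 2 + i = ((N + 2 + i : ℕ) : ℂ) := by push_cast; ring
  rw [this]
  exact Nat.cast_ne_zero.mpr (by omega)

lemma pochA_ne {n N : ℕ} (hnN : n ≤ N) (j : ℕ) : poch ((N:ℂ) - n + 1) j ≠ 0 := by
  apply poch_ne_zero
  intro i _
  have : (N:ℂ) - n + 1 + i = ((N - n + 1 + i : ℕ) : ℂ) := by
    push_cast [Nat.cast_sub hnN]; ring
  rw [this]
  exact Nat.cast_ne_zero.mpr (by omega)

lemma haB {N : ℕ} {a : ℂ} (ha : ∀ m : ℕ, a ≠ -(m : ℂ)) (i : ℕ) : a + N + 1 + (i:ℂ) ≠ 0 := by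
  intro h
  apply ha (N + 1 + i)
  push_cast
  linear_combination h

lemma pochB_ne {N : ℕ} {a : ℂ} (ha : ∀ m : ℕ, a ≠ -(m : ℂ)) (j : ℕ) :
    poch (a + N + 1) j ≠ 0 :=
  poch_ne_zero j (fun i _ => haB ha i)

lemma tailval {n N : ℕ} (hnN : n ≤ N) (a : ℂ) (ha : ∀ m : ℕ, a ≠ -(m : ℂ)) (j : ℕ) :
    Complex.Gamma (((j + (N+1) - n : ℕ) : ℂ)) * Complex.Gamma (a + ((j + (N+1) : ℕ) : ℂ)) /
      (Complex.Gamma (((j + (N+1) - N : ℕ) : ℂ)) * (((j + (N+1)).factorial : ℕ) : ℂ))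
    = Complex.Gamma (a + N + 1) * (((N - n).factorial : ℕ) : ℂ) / (((N+1).factorial : ℕ) : ℂ) *
      (poch ((N : ℂ) - n + 1) j * poch (a + N + 1) j /
        (poch ((N : ℂ) + 2) j * ((j.factorial : ℕ) : ℂ))) := by
  have e1 : j + (N+1) - n = ((N - n) + j) + 1 := by omega
  have e2 : j + (N+1) - N = j + 1 := by omega
  have e3 : j + (N+1) = (N+1) + j := by omega
  have hG1 : Complex.Gamma (((j + (N+1) - n : ℕ) : ℂ))
      = (((N - n).factorial : ℕ) : ℂ) * poch ((N:ℂ) - n + 1) j := by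
    rw [e1]
    have hc : ((((N - n) + j) + 1 : ℕ) : ℂ) = ((((N-n) + j : ℕ)) : ℂ) + 1 := by push_cast; ring
    rw [hc, Complex.Gamma_nat_eq_factorial, factPoch]
    have : (((N - n : ℕ)) : ℂ) + 1 = (N:ℂ) - n + 1 := by rw [Nat.cast_sub hnN]
    rw [this]
  have hG2 : Complex.Gamma (a + ((j + (N+1) : ℕ) : ℂ))
      = poch (a + N + 1) j * Complex.Gamma (a + N + 1) := by
    have e : a + ((j + (N+1) : ℕ) : ℂ) = (a + N + 1) + (j:ℂ) := by push_cast; ring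
    rw [e]
    exact gammaPoch _ j (fun i _ => haB ha i)
  have hG3 : Complex.Gamma (((j + (N+1) - N : ℕ) : ℂ)) = ((j.factorial : ℕ) : ℂ) := by
    rw [e2]
    have hc : (((j + 1 : ℕ)) : ℂ) = (j:ℂ) + 1 := by push_cast; ring
    rw [hc, Complex.Gamma_nat_eq_factorial]
  have hG4 : (((j + (N+1)).factorial : ℕ) : ℂ)
      = (((N+1).factorial : ℕ) : ℂ) * poch ((N:ℂ) + 2) j := by
    rw [e3, factPoch (N+1) j]
    have : (((N + 1 : ℕ)) : ℂ) + 1 = (N:ℂ) + 2 := by push_cast; ring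
    rw [this]
  rw [hG1, hG2, hG3, hG4]
  have h1 := fact_ne (N+1)
  have h2 := fact_ne j
  have h3 := pochC_ne N j
  field_simp

lemma normAtTop (d : ℂ) : Tendsto (fun j : ℕ => ‖(j:ℂ) + d‖) atTop atTop := by
  apply tendsto_atTop_mono' atTop (show ∀ᶠ j : ℕ in atTop, (j:ℝ) - ‖d‖ ≤ ‖(j:ℂ) + d‖ by
    filter_upwards [] with j
    have h1 : ‖(j:ℂ)‖ ≤ ‖(j:ℂ) + d‖ + ‖d‖ := by
      calc ‖(j:ℂ)‖ = ‖((j:ℂ) + d) + (-d)‖ := by ring_nf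
        _ ≤ ‖(j:ℂ) + d‖ + ‖(-d)‖ := norm_add_le _ _
        _ = ‖(j:ℂ) + d‖ + ‖d‖ := by rw [norm_neg]
    have h2 : ‖(j:ℂ)‖ = (j:ℝ) := by simp
    linarith)
  exact tendsto_atTop_add_const_right _ (-‖d‖) tendsto_natCast_atTop_atTop

lemma ratio1 (c d : ℂ) : Tendsto (fun j : ℕ => ((j:ℂ) + c)/((j:ℂ) + d)) atTop (𝓝 1) := by
  have h0 : Tendsto (fun j : ℕ => (c - d)/((j:ℂ) + d)) atTop (𝓝 0) := by
    rw [tendsto_zero_iff_norm_tendsto_zero]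
    simp only [norm_div]
    exact Tendsto.div_atTop tendsto_const_nhds (normAtTop d)
  have h1 : Tendsto (fun j : ℕ => 1 + (c - d)/((j:ℂ) + d)) atTop (𝓝 1) := by
    simpa using (tendsto_const_nhds (x := (1:ℂ)) (f := atTop)).add h0
  apply Tendsto.congr' _ h1
  have hne : ∀ᶠ j : ℕ in atTop, ((j:ℂ) + d) ≠ 0 := by
    have := (normAtTop d).eventually_gt_atTop 0
    filter_upwards [this] with j hj
    intro h
    rw [h] at hj
    simp at hj
  filter_upwards [hne] with j hj
  field_simp
  ring

lemma tSummable {n N : ℕ} (hnN : n ≤ N) {a : ℂ} (ha : ∀ m : ℕ, a ≠ -(m : ℂ)) {z : ℂ}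
    (hz : ‖z‖ < 1) :
    Summable (fun j : ℕ => poch ((N : ℂ) - n + 1) j * poch (a + N + 1) j /
      (poch ((N : ℂ) + 2) j * ((j.factorial : ℕ) : ℂ)) * z ^ j) := by
  set A : ℂ := (N : ℂ) - n + 1 with hA
  set B : ℂ := a + N + 1 with hB
  set C : ℂ := (N : ℂ) + 2 with hC
  set t : ℕ → ℂ := fun j => poch A j * poch B j / (poch C j * ((j.factorial : ℕ) : ℂ)) * z ^ j
    with ht
  rcases eq_or_ne z 0 with hz0 | hz0
  · apply summable_of_ne_finset_zero (s := {0})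
    intro j hj
    simp only [ht, hz0]
    rw [zero_pow (by simpa using hj), mul_zero]
  · have htne : ∀ j, t j ≠ 0 := by
      intro j
      exact mul_ne_zero (div_ne_zero (mul_ne_zero (pochA_ne hnN j) (pochB_ne ha j))
        (mul_ne_zero (pochC_ne N j) (fact_ne j))) (pow_ne_zero _ hz0)
    have hrec : ∀ j : ℕ, t (j+1) = t j * ((A + j) * (B + j) / ((C + j) * ((j:ℂ) + 1)) * z) := by
      intro j
      have hfs : (((j+1).factorial : ℕ) : ℂ) = ((j:ℂ) + 1) * ((j.factorial : ℕ) : ℂ) := by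
        push_cast [Nat.factorial_succ]; ring
      have hj1 : ((j:ℂ) + 1) ≠ 0 := by
        have : ((j:ℂ) + 1) = (((j+1:ℕ)) : ℂ) := by push_cast; ring
        rw [this]; exact Nat.cast_ne_zero.mpr (by omega)
      have hCj : C + (j:ℂ) ≠ 0 := by
        have : C + (j:ℂ) = ((N + 2 + j : ℕ) : ℂ) := by rw [hC]; push_cast; ring
        rw [this]; exact Nat.cast_ne_zero.mpr (by omega)
      simp only [ht, poch_succ, hfs, pow_succ]
      field_simp
    apply summable_of_ratio_test_tendsto_lt_one hz (Filter.Eventually.of_forall htne)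
    have hq : Tendsto (fun j : ℕ => ((A + j) * (B + j) / ((C + j) * ((j:ℂ) + 1))) * z) atTop
        (𝓝 z) := by
      have h1 : Tendsto (fun j : ℕ => (((j:ℂ) + A)/((j:ℂ) + C)) * (((j:ℂ) + B)/((j:ℂ) + 1)))
          atTop (𝓝 1) := by
        simpa using (ratio1 A C).mul (ratio1 B 1)
      have h2 : ∀ j : ℕ, (((j:ℂ) + A)/((j:ℂ) + C)) * (((j:ℂ) + B)/((j:ℂ) + 1))
          = (A + j) * (B + j) / ((C + j) * ((j:ℂ) + 1)) := by
        intro j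
        rw [div_mul_div_comm]
        ring_nf
      have h3 := h1.mul_const z
      rw [one_mul] at h3
      exact Tendsto.congr (fun j => by rw [h2 j]) h3
    have h4 := hq.norm
    apply Tendsto.congr _ h4
    intro j
    rw [hrec j]
    rw [norm_mul (t j)]
    rw [mul_comm (‖t j‖)]
    rw [mul_div_cancel_right₀ _ (norm_ne_zero_iff.mpr (htne j))]

open Filter Topology in
/-- Lemma on the regularized hypergeometric function `F̂(-n, a; -N; z)`, whose
coefficients `f k` are defined by taking limits (residues) of the singular
gamma-quotient summands. -/
theorem regularized_2F1_decomposition (n N : ℕ) (hnN : n ≤ N) (a : ℂ)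
    (ha : ∀ m : ℕ, a ≠ -(m : ℂ)) (z : ℂ) (hz : ‖z‖ < 1)
    (f : ℕ → ℂ)
    (hf : ∀ k : ℕ, Tendsto
      (fun ε : ℂ => Complex.Gamma (-(n : ℂ) + k + ε) * Complex.Gamma (a + k) /
        (Complex.Gamma (-(N : ℂ) + k + ε) * Complex.Gamma (1 + k)))
      (𝓝[≠] 0) (𝓝 (f k))) :
    ∑' k : ℕ, f k * z ^ k =
      (-1) ^ (N - n) * (Complex.Gamma a * (Nat.factorial N : ℂ) / (Nat.factorial n : ℂ)) *
        hyp n a (-(N : ℂ)) z +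
      Complex.Gamma (a + N + 1) * (Nat.factorial (N - n) : ℂ) / (Nat.factorial (N + 1) : ℂ) *
        z ^ (N + 1) *
        ∑' k : ℕ, poch ((N : ℂ) - n + 1) k * poch (a + N + 1) k /
          (poch ((N : ℂ) + 2) k * (Nat.factorial k : ℂ)) * z ^ k := by

  -- values of f
  have hle : ∀ k : ℕ, k ≤ n → f k
      = (-1) ^ (N - n) * (((N-k).factorial : ℕ) : ℂ) / (((n-k).factorial : ℕ) : ℂ) *
        Complex.Gamma (a + k) / ((k.factorial : ℂ)) :=
    fun k hk => tendsto_nhds_unique (hf k) (limLe hk hnN a)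
  have hmid : ∀ k : ℕ, n < k → k ≤ N → f k = 0 :=
    fun k h1 h2 => tendsto_nhds_unique (hf k) (limMid h1 h2 a)
  have hgt : ∀ j : ℕ, f (j + (N+1))
      = Complex.Gamma (a + N + 1) * (((N - n).factorial : ℕ) : ℂ) /
          (((N+1).factorial : ℕ) : ℂ) *
        (poch ((N : ℂ) - n + 1) j * poch (a + N + 1) j /
          (poch ((N : ℂ) + 2) j * ((j.factorial : ℕ) : ℂ))) := by
    intro j
    have h1 := tendsto_nhds_unique (hf (j + (N+1))) (limGt hnN (by omega) a)
    rw [h1, tailval hnN a ha j]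
  -- summability of the shifted series
  have Su : Summable (fun j : ℕ => f (j + (N+1)) * z ^ (j + (N+1))) := by
    apply Summable.congr ((tSummable hnN ha hz).mul_left
      (Complex.Gamma (a + N + 1) * (((N - n).factorial : ℕ) : ℂ) /
        (((N+1).factorial : ℕ) : ℂ) * z ^ (N+1)))
    intro j
    rw [hgt j, pow_add]
    ring
  rw [← Summable.sum_add_tsum_nat_add' (f := fun k => f k * z ^ k) (k := N+1) Su]
  congr 1
  · -- finite part
    have hsub : ∑ k ∈ Finset.range (N+1), f k * z ^ k
        = ∑ k ∈ Finset.range (n+1), f k * z ^ k := by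
      refine (Finset.sum_subset ?_ ?_).symm
      · intro x hx
        simp only [Finset.mem_range] at *
        omega
      · intro x hx hx'
        simp only [Finset.mem_range] at hx hx'
        rw [hmid x (by omega) (by omega), zero_mul]
    rw [hsub, hyp, Finset.mul_sum]
    refine Finset.sum_congr rfl ?_
    intro k hk
    have hkn : k ≤ n := by simpa [Nat.lt_succ_iff] using Finset.mem_range.mp hk
    rw [hle k hkn, pochNeg hkn, pochNeg (hkn.trans hnN),
      gammaPoch a k (fun i _ => fun h => ha i (by linear_combination h))]
    have h1 := fact_ne n
    have h2 := fact_ne N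
    have h3 := fact_ne k
    have h4 := fact_ne (n-k)
    have h5 := fact_ne (N-k)
    have h6 : Complex.Gamma a ≠ 0 := Complex.Gamma_ne_zero ha
    have h7 : ((-1:ℂ))^k ≠ 0 := pow_ne_zero _ (by norm_num)
    have cancel : ∀ (e P Q R S pa K : ℂ), e ≠ 0 → Q ≠ 0 → R ≠ 0 → S ≠ 0 → K ≠ 0 →
        e * P / Q * pa / (e * R / S * K) = P * S * pa / (Q * R * K) := by
      intro e P Q R S pa K he hQ hR hS hK
      field_simp
    rw [cancel ((-1:ℂ)^k) _ _ _ _ _ _ h7 h4 h2 h5 h3]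
    field_simp
  · -- tail part
    have he : ∀ j : ℕ, f (j + (N+1)) * z ^ (j + (N+1))
        = (Complex.Gamma (a + N + 1) * (((N - n).factorial : ℕ) : ℂ) /
            (((N+1).factorial : ℕ) : ℂ) * z ^ (N+1)) *
          (poch ((N : ℂ) - n + 1) j * poch (a + N + 1) j /
            (poch ((N : ℂ) + 2) j * ((j.factorial : ℕ) : ℂ)) * z ^ j) := by
      intro j
      rw [hgt j, pow_add]
      ring
    rw [tsum_congr he, tsum_mul_left]
end

section
/- Let n, m, ℓ be nonnegative integers. Then 2F1(-ℓ, -n-ℓ; -m-n-2ℓ; z) = (1-z)^{-m} · 2F1(-m-ℓ, -n-m-ℓ; -n-m-2ℓ; z), as an identity of rational functions of z. -/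
open Finset

noncomputable def dsc (x : ℂ) (k : ℕ) : ℂ := (descPochhammer ℂ k).eval x

lemma dsc_succ (x : ℂ) (n : ℕ) : dsc x (n+1) = dsc x n * (x - n) :=
  descPochhammer_succ_eval n x

lemma dsc_vandermonde (x y : ℂ) (n : ℕ) :
    dsc (x+y) n = ∑ k ∈ range (n+1), (n.choose k : ℂ) * (dsc x k * dsc y (n-k)) := by
  induction n with
  | zero => simp [dsc]
  | succ n ih =>
    have key : ∑ k ∈ range (n+1+1), ((n+1).choose k : ℂ) * (dsc x k * dsc y (n+1-k))
        = ∑ k ∈ range (n+1), (n.choose k : ℂ) * (dsc x (k+1) * dsc y (n-k))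
          + ∑ k ∈ range (n+1+1), (n.choose k : ℂ) * (dsc x k * dsc y (n+1-k)) := by
      rw [sum_range_succ' (fun k => ((n+1).choose k : ℂ) * (dsc x k * dsc y (n+1-k))) (n+1),
        sum_range_succ' (fun k => ((n).choose k : ℂ) * (dsc x k * dsc y (n+1-k))) (n+1)]
      have : ∀ k ∈ range (n+1), ((n+1).choose (k+1) : ℂ) * (dsc x (k+1) * dsc y (n+1-(k+1)))
          = (n.choose k : ℂ) * (dsc x (k+1) * dsc y (n-k))
            + (n.choose (k+1) : ℂ) * (dsc x (k+1) * dsc y (n+1-(k+1))) := by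
        intro k hk
        have : n + 1 - (k+1) = n - k := by omega
        rw [this, Nat.choose_succ_succ]
        push_cast
        ring
      rw [sum_congr rfl this, sum_add_distrib]
      simp
      ring
    rw [dsc_succ, ih, key]
    have h1 : ∑ k ∈ range (n+1+1), (n.choose k : ℂ) * (dsc x k * dsc y (n+1-k))
        = ∑ k ∈ range (n+1), (n.choose k : ℂ) * (dsc x k * dsc y (n+1-k)) := by
      rw [sum_range_succ]
      simp
    rw [h1, ← sum_add_distrib, sum_mul]
    apply sum_congr rfl
    intro k hk
    have hk' : k ≤ n := by simpa [Nat.lt_succ_iff] using hk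
    have h2 : n + 1 - k = (n - k) + 1 := by omega
    have h3 : ((n - k : ℕ) : ℂ) = (n : ℂ) - k := by
      push_cast [Nat.cast_sub hk']; ring
    rw [h2, dsc_succ, dsc_succ, h3]
    ring

lemma dsc_eq_poch (x : ℂ) (k : ℕ) : dsc x k = poch (x - k + 1) k :=
  descPochhammer_eval_eq_ascPochhammer (R := ℂ) x k

lemma poch_neg_dsc (x : ℂ) (k : ℕ) : poch (-x) k = (-1)^k * dsc x k :=
  ascPochhammer_eval_neg_eq_descPochhammer (R := ℂ) x k

lemma dsc_eq_neg_poch (x : ℂ) (k : ℕ) : dsc x k = (-1)^k * poch (-x) k := by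
  rw [poch_neg_dsc, ← mul_assoc, ← mul_pow]
  simp

lemma poch_neg_nat (N k : ℕ) : poch (-(N:ℂ)) k = (-1)^k * (N.descFactorial k : ℂ) := by
  rw [poch_neg_dsc]
  congr 1
  exact descPochhammer_eval_eq_descFactorial ℂ N k

lemma poch_neg_nat_ne_zero {N k : ℕ} (h : k ≤ N) : poch (-(N:ℂ)) k ≠ 0 := by
  rw [poch_neg_nat]
  refine mul_ne_zero (pow_ne_zero _ (by norm_num)) ?_
  simpa [Nat.descFactorial_eq_zero_iff_lt] using by omega

lemma poch_split (c : ℂ) {k j : ℕ} (h : k ≤ j) :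
    poch c j = poch c k * poch (c + k) (j - k) := by
  have := congrArg (Polynomial.eval c) (ascPochhammer_mul (S := ℂ) k (j - k))
  simp only [Polynomial.eval_mul, Polynomial.eval_comp, Polynomial.eval_add,
    Polynomial.eval_X, Polynomial.eval_natCast] at this
  rw [poch, poch, poch]
  conv_lhs => rw [show j = k + (j - k) from by omega]
  exact this.symm

lemma chu_vandermonde (j : ℕ) (b c : ℂ) :
    ∑ k ∈ range (j+1), (-1:ℂ)^k * (j.choose k : ℂ) * poch (c-b) k * poch (c+k) (j-k)
      = poch b j := by
  have h1 : poch b j = dsc ((b - c) + (c + j - 1)) j := by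
    rw [dsc_eq_poch]
    congr 1
    ring
  rw [h1, dsc_vandermonde]
  apply sum_congr rfl
  intro k hk
  have hk' : k ≤ j := by simpa [Nat.lt_succ_iff] using hk
  have h2 : dsc (b - c) k = (-1:ℂ)^k * poch (c - b) k := by
    rw [dsc_eq_neg_poch]
    congr 2
    ring
  have h3 : dsc (c + j - 1) (j - k) = poch (c + k) (j - k) := by
    rw [dsc_eq_poch]
    congr 1
    have : ((j - k : ℕ) : ℂ) = (j : ℂ) - k := by
      push_cast [Nat.cast_sub hk']; ring
    rw [this]; ring
  rw [h2, h3]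
  ring

lemma nat_fact_id {N j k : ℕ} (hj : j ≤ N) (hk : k ≤ j) :
    N.descFactorial k * (N - k).choose (j - k) = k.factorial * (N.choose j * j.choose k) := by
  rw [Nat.descFactorial_eq_factorial_mul_choose, mul_assoc, ← Nat.choose_mul (n := N) hk]

lemma pfaff_coeff {N j : ℕ} (b c : ℂ) (hc : ∀ k, k ≤ N → poch c k ≠ 0) (hj : j ≤ N) :
    ∑ k ∈ range (j+1),
        poch (-(N:ℂ)) k * poch (c-b) k / (poch c k * (Nat.factorial k : ℂ))
          * ((N-k).choose (j-k) : ℂ)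
      = (N.choose j : ℂ) * poch b j / poch c j := by
  have hcj : poch c j ≠ 0 := hc j hj
  have step : ∀ k ∈ range (j+1),
      poch (-(N:ℂ)) k * poch (c-b) k / (poch c k * (Nat.factorial k : ℂ))
          * ((N-k).choose (j-k) : ℂ)
        = (N.choose j : ℂ) / poch c j
            * ((-1:ℂ)^k * (j.choose k : ℂ) * poch (c-b) k * poch (c+k) (j-k)) := by
    intro k hk
    have hk' : k ≤ j := by simpa [Nat.lt_succ_iff] using hk
    have hsplit := poch_split c hk'
    have hck : poch c k ≠ 0 := hc k (hk'.trans hj)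
    have htail : poch (c + k) (j - k) ≠ 0 := by
      intro h0
      exact hcj (by rw [hsplit, h0, mul_zero])
    have hfac : ((Nat.factorial k : ℕ) : ℂ) ≠ 0 := by
      exact_mod_cast (Nat.factorial_pos k).ne'
    have hnat : ((N.descFactorial k : ℕ) : ℂ) * ((N-k).choose (j-k) : ℂ)
        = (Nat.factorial k : ℂ) * ((N.choose j : ℂ) * (j.choose k : ℂ)) := by
      exact_mod_cast congrArg (Nat.cast (R := ℂ)) (nat_fact_id hj hk')
    rw [poch_neg_nat, hsplit]
    field_simp
    linear_combination
      (poch (c-b) k) * hnat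
  rw [sum_congr rfl step, ← mul_sum, chu_vandermonde]
  ring

lemma sum_triangle (N : ℕ) (f : ℕ → ℕ → ℂ) :
    ∑ k ∈ range (N+1), ∑ i ∈ range (N+1-k), f k i
      = ∑ j ∈ range (N+1), ∑ k ∈ range (j+1), f k (j-k) := by
  rw [Finset.sum_sigma', Finset.sum_sigma']
  refine Finset.sum_nbij' (i := fun (x : Σ _ : ℕ, ℕ) => (⟨x.1 + x.2, x.1⟩ : Σ _ : ℕ, ℕ))
    (j := fun (x : Σ _ : ℕ, ℕ) => (⟨x.2, x.1 - x.2⟩ : Σ _ : ℕ, ℕ))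
    ?_ ?_ ?_ ?_ ?_
  · rintro ⟨a, b⟩ hab
    simp only [Finset.mem_sigma, Finset.mem_range] at hab ⊢
    omega
  · rintro ⟨a, b⟩ hab
    simp only [Finset.mem_sigma, Finset.mem_range] at hab ⊢
    omega
  · rintro ⟨a, b⟩ hab
    show (⟨a, a + b - a⟩ : Σ _ : ℕ, ℕ) = ⟨a, b⟩
    have h : a + b - a = b := by omega
    rw [h]
  · rintro ⟨a, b⟩ hab
    simp only [Finset.mem_sigma, Finset.mem_range] at hab
    show (⟨b + (a - b), b⟩ : Σ _ : ℕ, ℕ) = ⟨a, b⟩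
    have h : b + (a - b) = a := by omega
    rw [h]
  · rintro ⟨a, b⟩ hab
    show f a b = f a (a + b - a)
    have h : a + b - a = b := by omega
    rw [h]

lemma pfaff (N : ℕ) (b c z : ℂ) (hc : ∀ k, k ≤ N → poch c k ≠ 0) :
    ∑ k ∈ range (N+1), poch (-(N:ℂ)) k * poch b k / (poch c k * (Nat.factorial k : ℂ)) * z ^ k
      = ∑ k ∈ range (N+1), poch (-(N:ℂ)) k * poch (c-b) k / (poch c k * (Nat.factorial k : ℂ))
          * ((-z) ^ k * (1-z) ^ (N-k)) := by
  symm
  calc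
    ∑ k ∈ range (N+1), poch (-(N:ℂ)) k * poch (c-b) k / (poch c k * (Nat.factorial k : ℂ))
          * ((-z) ^ k * (1-z) ^ (N-k))
      = ∑ k ∈ range (N+1), ∑ i ∈ range (N+1-k),
          poch (-(N:ℂ)) k * poch (c-b) k / (poch c k * (Nat.factorial k : ℂ))
            * ((-z) ^ k * ((-z)^i * ((N-k).choose i : ℂ))) := by
        apply sum_congr rfl
        intro k hk
        have hk' : k ≤ N := by simpa [Nat.lt_succ_iff] using hk
        have hbin : (1-z) ^ (N-k) = ∑ i ∈ range (N-k+1), (-z)^i * ((N-k).choose i : ℂ) := by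
          rw [show (1:ℂ) - z = -z + 1 from by ring, add_pow]
          simp
        have hr : N + 1 - k = N - k + 1 := by omega
        rw [hbin, hr, mul_sum, mul_sum]
    _ = ∑ j ∈ range (N+1), ∑ k ∈ range (j+1),
          poch (-(N:ℂ)) k * poch (c-b) k / (poch c k * (Nat.factorial k : ℂ))
            * ((-z) ^ k * ((-z)^(j-k) * ((N-k).choose (j-k) : ℂ))) :=
        sum_triangle N _
    _ = ∑ j ∈ range (N+1), poch (-(N:ℂ)) j * poch b j / (poch c j * (Nat.factorial j : ℂ)) * z ^ j := by
        apply sum_congr rfl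
        intro j hj
        have hj' : j ≤ N := by simpa [Nat.lt_succ_iff] using hj
        have h1 : ∀ k ∈ range (j+1),
            poch (-(N:ℂ)) k * poch (c-b) k / (poch c k * (Nat.factorial k : ℂ))
              * ((-z) ^ k * ((-z)^(j-k) * ((N-k).choose (j-k) : ℂ)))
            = (-z)^j * (poch (-(N:ℂ)) k * poch (c-b) k / (poch c k * (Nat.factorial k : ℂ))
                * ((N-k).choose (j-k) : ℂ)) := by
          intro k hk
          have hk' : k ≤ j := by simpa [Nat.lt_succ_iff] using hk
          have : (-z)^k * (-z)^(j-k) = (-z)^j := by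
            rw [← pow_add]
            congr 1
            omega
          rw [← this]
          ring
        rw [sum_congr rfl h1, ← mul_sum, pfaff_coeff b c hc hj']
        have hNj : poch (-(N:ℂ)) j = (-1)^j * (N.descFactorial j : ℂ) := poch_neg_nat N j
        have hdf : (N.descFactorial j : ℂ) = (Nat.factorial j : ℂ) * (N.choose j : ℂ) := by
          exact_mod_cast congrArg (Nat.cast (R := ℂ)) (Nat.descFactorial_eq_factorial_mul_choose N j)
        have hfac : ((Nat.factorial j : ℕ) : ℂ) ≠ 0 := by
          exact_mod_cast (Nat.factorial_pos j).ne'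
        have hcj : poch c j ≠ 0 := hc j hj'
        rw [hNj, hdf]
        have hz : (-z)^j = (-1)^j * z^j := by
          rw [neg_pow]
        rw [hz]
        field_simp

theorem additive_case_euler_transform (n m l : ℕ) (z : ℂ) (hz : z ≠ 1) :
    hyp l (-(n : ℂ) - l) (-(m : ℂ) - n - 2 * l) z =
      (1 - z) ^ (-(m : ℤ)) * hyp (m + l) (-(n : ℂ) - m - l) (-(n : ℂ) - m - 2 * l) z := by
  have h1z : (1 : ℂ) - z ≠ 0 := sub_ne_zero.mpr (Ne.symm hz)
  have ec : (-(n : ℂ) - m - 2 * l) = (-(m : ℂ) - n - 2 * l) := by ring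
  set c : ℂ := -(m : ℂ) - n - 2 * l with hc_def
  have hcM : c = -((m + n + 2*l : ℕ) : ℂ) := by rw [hc_def]; push_cast; ring
  have hc : ∀ k, k ≤ m + l → poch c k ≠ 0 := by
    intro k hk
    rw [hcM]
    exact poch_neg_nat_ne_zero (by omega)
  have hcl : ∀ k, k ≤ l → poch c k ≠ 0 := fun k hk => hc k (by omega)
  rw [ec, hyp, hyp, pfaff l (-(n : ℂ) - l) c z hcl, pfaff (m+l) (-(n : ℂ) - m - l) c z hc]
  have e1 : c - (-(n : ℂ) - l) = -(m : ℂ) - l := by rw [hc_def]; ring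
  have e2 : c - (-(n : ℂ) - m - l) = -(l : ℂ) := by rw [hc_def]; ring
  have e3 : (-((m + l : ℕ) : ℂ)) = -(m : ℂ) - l := by push_cast; ring
  simp only [e1, e2, e3, mul_sum]
  rw [← Finset.sum_subset (Finset.range_subset_range.mpr (by omega : l + 1 ≤ m + l + 1))
      (by
        intro k hk1 hk2
        have hlk : l < k := by
          simp only [Finset.mem_range] at hk1 hk2
          omega
        have : poch (-(l : ℂ)) k = 0 := ascPochhammer_eval_neg_coe_nat_of_lt hlk
        rw [this]
        ring)]
  apply sum_congr rfl
  intro k hk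
  have hk' : k ≤ l := by simpa [Nat.lt_succ_iff] using hk
  have hsplit : (1 - z) ^ (m + l - k) = (1 - z)^m * (1 - z)^(l - k) := by
    rw [← pow_add]
    congr 1
    omega
  have hzp : (1 - z) ^ (-(m : ℤ)) * (1 - z)^m = 1 := by
    rw [zpow_neg, zpow_natCast]
    exact inv_mul_cancel₀ (pow_ne_zero _ h1z)
  rw [hsplit]
  field_simp [zpow_neg]
  have hinv : ((1 - z)⁻¹) ^ m * (1 - z) ^ m = 1 := by
    rw [← mul_pow, inv_mul_cancel₀ h1z, one_pow]
  linear_combination (-(poch (-(l:ℂ)) k * poch (-(m:ℂ) - l) k * z ^ k *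
    (poch c k)⁻¹ * ((k.factorial : ℂ))⁻¹ * (-1) ^ k)) * hzp
end
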